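/- Let A be a finitely generated abelian group and B an abelian group, and let f : A → B be a homomorphism such that (i) the restriction of f to the torsion subgroup of A is injective, and (ii) f maps the 2-torsion subgroup A[2] = {a ∈ A : 2a = 0} onto the 2-torsion subgroup B[2]. Suppose further that there are abelian groups H and H', homomorphisms δ : A → H and δ' : B → H' with ker δ = 2A (the subgroup of elements of the form 2a), and an injective homomorphism h : H → H' with h∘δ = δ'∘f. Then f is injective. -/
import Mathlib


/-- Let `A` be a finitely generated abelian group, `f : A → B` a homomorphism that is
injective on the torsion subgroup of `A` and maps `A[2]` onto `B[2]`. Suppose there are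
homomorphisms `δ : A → H` with `ker δ = 2A`, `δ' : B → H'`, and an injective homomorphism
`h : H → H'` with `h ∘ δ = δ' ∘ f`. Then `f` is injective. -/
theorem specialization_injective
    {A B H H' : Type*} [AddCommGroup A] [AddCommGroup B] [AddCommGroup H] [AddCommGroup H']
    [AddGroup.FG A]
    (f : A →+ B)
    (htors : ∀ a a' : A, IsOfFinAddOrder a → IsOfFinAddOrder a' → f a = f a' → a = a')
    (h2tors : ∀ b : B, 2 • b = 0 → ∃ a : A, 2 • a = 0 ∧ f a = b)
    (δ : A →+ H) (δ' : B →+ H')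
    (hkerδ : ∀ a : A, δ a = 0 ↔ ∃ a' : A, a = 2 • a')
    (h : H →+ H') (hinj : Function.Injective h)
    (hcomm : ∀ a : A, h (δ a) = δ' (f a)) :
    Function.Injective f := by
  have : Module.Finite ℤ A := Module.Finite.iff_addGroup_fg.mpr ‹AddGroup.FG A›
  -- the kernel of f as a ℤ-submodule
  set K : Submodule ℤ A := LinearMap.ker f.toIntLinearMap with hK
  have hKmem : ∀ a : A, a ∈ K ↔ f a = 0 := fun a => Iff.rfl
  -- K ⊆ 2K
  have hle : K ≤ (Ideal.span {(2 : ℤ)}) • K := by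
    intro a ha
    rw [hKmem] at ha
    -- δ a = 0
    have hδa : δ a = 0 := by
      apply hinj
      rw [hcomm, ha, map_zero, map_zero]
    obtain ⟨a', ha'⟩ := (hkerδ a).mp hδa
    -- f a' is 2-torsion
    have h2fa' : 2 • f a' = 0 := by
      rw [← map_nsmul, ← ha', ha]
    obtain ⟨t, ht2, htf⟩ := h2tors (f a') h2fa'
    have hmem : a' - t ∈ K := by
      rw [hKmem, map_sub, htf, sub_self]
    have : a = (2 : ℤ) • (a' - t) := by
      rw [smul_sub, ha']
      have : (2 : ℤ) • t = 0 := by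
        rw [← Nat.cast_ofNat, natCast_zsmul]; exact ht2
      rw [this, sub_zero]
      norm_cast
    rw [this]
    exact Submodule.smul_mem_smul (Ideal.mem_span_singleton_self 2) hmem
  have hfg : K.FG := IsNoetherian.noetherian K
  obtain ⟨r, hr1, hr0⟩ :=
    Submodule.exists_sub_one_mem_and_smul_eq_zero_of_fg_of_le_smul (Ideal.span {(2 : ℤ)}) K hfg hle
  have hrne : r ≠ 0 := by
    rintro rfl
    rw [Ideal.mem_span_singleton] at hr1
    omega
  -- now finish
  intro x y hxy
  have hd : x - y ∈ K := by rw [hKmem, map_sub, hxy, sub_self]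
  have hfin : IsOfFinAddOrder (x - y) := by
    rw [isOfFinAddOrder_iff_zsmul_eq_zero]
    exact ⟨r, hrne, hr0 _ hd⟩
  have := htors (x - y) 0 hfin (.zero) (by
    rw [map_sub, hxy, sub_self, map_zero])
  exact sub_eq_zero.mp this
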